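/- Let γ > 0 satisfy 1 − u_ij(A) l_ij(A) γ > 0 for all A ∈ Ω and 1 ≤ i < j ≤ m. Then the transition matrix of the γ-switch chain decomposes as P_γ = Σ_{1≤i<j≤m} C(m,2)^{-1} Σ_{N ∈ R_{(i,j)}} [(1 − u_ij l_ij γ)·I_N + γ·M(H_N)], where R_{(i,j)} is the set of equivalence classes of the relation B ∼_{ij} B' iff B' ∈ N_ij(B), I_N is the diagonal 0/1 matrix of the class N, and M(H_N) is the adjacency matrix of the graph on Ω that is the Johnson graph J(u_ij+l_ij, u_ij) on N (under switch-adjacency for rows i,j) with all other matrices isolated. Moreover, the Curveball transition matrix satisfies P_c = Σ_{1≤i<j≤m} C(m,2)^{-1} Σ_{N ∈ R_{(i,j)}} C(u_ij+l_ij, u_ij)^{-1} J_N, where J_N is the all-ones matrix on N×N and zero elsewhere; i.e., the Curveball chain is the heat-bath variant of the γ-switch chain. -/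

import Mathlib

open Finset

attribute [local instance] Classical.propDecidable

/-- A binary `m × n` matrix, with `true` representing a `1` entry. -/
abbrev BinMat (m n : ℕ) := Fin m → Fin n → Bool

/-- `A ∈ Ω(r,c,F)`: the binary matrix `A` has row sums `r`, column sums `c`, and is zero
on the forbidden entries `F`. -/
def inOmega {m n : ℕ} (r : Fin m → ℕ) (c : Fin n → ℕ) (F : Finset (Fin m × Fin n))
    (A : BinMat m n) : Prop :=
  (∀ i : Fin m, (univ.filter fun k => A i k = true).card = r i) ∧
  (∀ k : Fin n, (univ.filter fun i => A i k = true).card = c k) ∧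
  ∀ p ∈ F, A p.1 p.2 = false

/-- `U_ij(A)`: columns with a `1` in row `i`, a `0` in row `j`, and `(j,k)` not forbidden. -/
def Uset {m n : ℕ} (F : Finset (Fin m × Fin n)) (i j : Fin m) (A : BinMat m n) :
    Finset (Fin n) :=
  univ.filter fun k => A i k = true ∧ A j k = false ∧ (j, k) ∉ F

/-- `L_ij(A)`: columns with a `0` in row `i`, a `1` in row `j`, and `(i,k)` not forbidden. -/
def Lset {m n : ℕ} (F : Finset (Fin m × Fin n)) (i j : Fin m) (A : BinMat m n) :
    Finset (Fin n) :=
  univ.filter fun k => A i k = false ∧ A j k = true ∧ (i, k) ∉ F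

/-- `u_ij(A) = |U_ij(A)|`. -/
def usize {m n : ℕ} (F : Finset (Fin m × Fin n)) (i j : Fin m) (A : BinMat m n) : ℕ :=
  (Uset F i j A).card

/-- `l_ij(A) = |L_ij(A)|`. -/
def lsize {m n : ℕ} (F : Finset (Fin m × Fin n)) (i j : Fin m) (A : BinMat m n) : ℕ :=
  (Lset F i j A).card

/-- `B ∈ N_ij(A)`: `B ∈ Ω` and `B` agrees with `A` outside `{i,j} × (U_ij(A) ∪ L_ij(A))`. -/
def inNbhd {m n : ℕ} (r : Fin m → ℕ) (c : Fin n → ℕ) (F : Finset (Fin m × Fin n))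
    (i j : Fin m) (A B : BinMat m n) : Prop :=
  inOmega r c F B ∧
  ∀ k l, (k, l) ∉ (({i, j} : Finset (Fin m)) ×ˢ (Uset F i j A ∪ Lset F i j A)) →
    B k l = A k l

/-- `A` and `B` are switch-adjacent for rows `i, j`: `A - B` has exactly four nonzero
entries, all in rows `i` and `j`, and the columns containing them have no forbidden
entries in rows `i` and `j`. -/
def switchAdjIJ {m n : ℕ} (F : Finset (Fin m × Fin n)) (i j : Fin m)
    (A B : BinMat m n) : Prop :=
  ((univ : Finset (Fin m × Fin n)).filter fun p => A p.1 p.2 ≠ B p.1 p.2).card = 4 ∧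
  (∀ p ∈ (univ : Finset (Fin m × Fin n)).filter fun p => A p.1 p.2 ≠ B p.1 p.2,
    p.1 = i ∨ p.1 = j) ∧
  ∀ p ∈ (univ : Finset (Fin m × Fin n)).filter fun p => A p.1 p.2 ≠ B p.1 p.2,
    (i, p.2) ∉ F ∧ (j, p.2) ∉ F

/-- The pairs of rows `i < j`. -/
def rowPairs (m : ℕ) : Finset (Fin m × Fin m) :=
  univ.filter fun p => p.1 < p.2

/-- The state space `Ω(r,c,F)` as a type. -/
abbrev OmegaType {m n : ℕ} (r : Fin m → ℕ) (c : Fin n → ℕ) (F : Finset (Fin m × Fin n)) :=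
  {A : BinMat m n // inOmega r c F A}

/-- Transition matrix of the `γ`-switch chain on `Ω(r,c,F)`. -/
noncomputable def Pgamma {m n : ℕ} (r : Fin m → ℕ) (c : Fin n → ℕ)
    (F : Finset (Fin m × Fin n)) (γ : ℝ) :
    Matrix (OmegaType r c F) (OmegaType r c F) ℝ :=
  Matrix.of fun A B =>
    if A = B then
      (m.choose 2 : ℝ)⁻¹ *
        ∑ p ∈ rowPairs m,
          (1 - (usize F p.1 p.2 A.val : ℝ) * (lsize F p.1 p.2 A.val : ℝ) * γ)
    else if ∃ p ∈ rowPairs m, switchAdjIJ F p.1 p.2 A.val B.val then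
      (m.choose 2 : ℝ)⁻¹ * γ
    else 0

/-- Transition matrix of the Curveball chain on `Ω(r,c,F)`.  (For `A ≠ B` at most one
row pair `p` satisfies `B ∈ N_p(A)`, so the sum below has at most one nonzero term.) -/
noncomputable def Pcurve {m n : ℕ} (r : Fin m → ℕ) (c : Fin n → ℕ)
    (F : Finset (Fin m × Fin n)) :
    Matrix (OmegaType r c F) (OmegaType r c F) ℝ :=
  Matrix.of fun A B =>
    if A = B then
      (m.choose 2 : ℝ)⁻¹ *
        ∑ p ∈ rowPairs m,
          (((usize F p.1 p.2 A.val + lsize F p.1 p.2 A.val).choose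
            (usize F p.1 p.2 A.val) : ℝ))⁻¹
    else
      ∑ p ∈ rowPairs m,
        if inNbhd r c F p.1 p.2 A.val B.val then
          (m.choose 2 : ℝ)⁻¹ *
            (((usize F p.1 p.2 A.val + lsize F p.1 p.2 A.val).choose
              (usize F p.1 p.2 A.val) : ℝ))⁻¹
        else 0

/-- The `(i,j)`-binomial neighborhood of `A`, i.e. the `∼_ij`-equivalence class of `A`,
as a finite subset of `Ω(r,c,F)`. -/
noncomputable def nbhdClass {m n : ℕ} (r : Fin m → ℕ) (c : Fin n → ℕ)
    (F : Finset (Fin m × Fin n)) (i j : Fin m) (A : OmegaType r c F) :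
    Finset (OmegaType r c F) :=
  univ.filter fun B => inNbhd r c F i j A.val B.val

/-- The set `R_(i,j)` of equivalence classes of the relation `B ∼_ij B' ↔ B' ∈ N_ij(B)`. -/
noncomputable def nbhdClasses {m n : ℕ} (r : Fin m → ℕ) (c : Fin n → ℕ)
    (F : Finset (Fin m × Fin n)) (i j : Fin m) :
    Finset (Finset (OmegaType r c F)) :=
  univ.image (nbhdClass r c F i j)

/-- The common value `u_ij` on a class `N` (realized as a `sup`, since `u_ij` is
constant on each binomial neighborhood). -/
noncomputable def uclass {m n : ℕ} {r : Fin m → ℕ} {c : Fin n → ℕ}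
    {F : Finset (Fin m × Fin n)} (i j : Fin m) (N : Finset (OmegaType r c F)) : ℕ :=
  N.sup fun A => usize F i j A.val

/-- The common value `l_ij` on a class `N`. -/
noncomputable def lclass {m n : ℕ} {r : Fin m → ℕ} {c : Fin n → ℕ}
    {F : Finset (Fin m × Fin n)} (i j : Fin m) (N : Finset (OmegaType r c F)) : ℕ :=
  N.sup fun A => lsize F i j A.val

/-- `I_N`: identity on `N`, zero elsewhere. -/
noncomputable def diagOn {X : Type*} (N : Finset X) : Matrix X X ℝ :=
  Matrix.of fun A B => if A = B ∧ A ∈ N then 1 else 0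

/-- `J_N`: all ones on `N × N`, zero elsewhere. -/
noncomputable def onesOn {X : Type*} (N : Finset X) : Matrix X X ℝ :=
  Matrix.of fun A B => if A ∈ N ∧ B ∈ N then 1 else 0

/-- `M(H_N)`: the adjacency matrix of the graph on `Ω` that is the Johnson graph on `N`
(under switch-adjacency for rows `i, j`), all other states being isolated. -/
noncomputable def johnsonAdjOn {m n : ℕ} {r : Fin m → ℕ} {c : Fin n → ℕ}
    {F : Finset (Fin m × Fin n)} (i j : Fin m) (N : Finset (OmegaType r c F)) :
    Matrix (OmegaType r c F) (OmegaType r c F) ℝ :=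
  Matrix.of fun A B => if A ∈ N ∧ B ∈ N ∧ switchAdjIJ F i j A.val B.val then 1 else 0


section Aux

variable {m n : ℕ} {r : Fin m → ℕ} {c : Fin n → ℕ} {F : Finset (Fin m × Fin n)}

lemma sum_toNat_eq_of_agree {α : Type*} [Fintype α] [DecidableEq α] (f g : α → Bool)
    (T : Finset α) (hagree : ∀ x ∉ T, f x = g x)
    (hcard : (univ.filter fun x => f x = true).card
      = (univ.filter fun x => g x = true).card) :
    ∑ x ∈ T, (f x).toNat = ∑ x ∈ T, (g x).toNat := by
  have hf : ∀ h : α → Bool,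
      (univ.filter fun x => h x = true).card = ∑ x ∈ (univ : Finset α), (h x).toNat := by
    intro h
    rw [Finset.card_filter]
    exact Finset.sum_congr rfl fun x _ => by cases h x <;> simp
  have h1 : ∑ x ∈ (univ : Finset α), (f x).toNat
      = ∑ x ∈ (univ : Finset α), (g x).toNat := by rw [← hf, ← hf, hcard]
  have h2 : ∑ x ∈ univ \ T, (f x).toNat = ∑ x ∈ univ \ T, (g x).toNat :=
    Finset.sum_congr rfl fun x hx => by rw [hagree x (Finset.mem_sdiff.mp hx).2]
  have h3 : ∀ h : α → Bool, ∑ x ∈ (univ : Finset α), (h x).toNat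
      = ∑ x ∈ T, (h x).toNat + ∑ x ∈ univ \ T, (h x).toNat := by
    intro h
    rw [← Finset.sum_union Finset.sdiff_disjoint.symm,
      Finset.union_sdiff_of_subset (Finset.subset_univ T)]
  rw [h3 f, h3 g] at h1
  omega

lemma inNbhd_refl (i j : Fin m) {A : BinMat m n} (hA : inOmega r c F A) :
    inNbhd r c F i j A A := ⟨hA, fun _ _ _ => rfl⟩

lemma nbhd_invariance {i j : Fin m} (hij : i ≠ j) {A B : BinMat m n}
    (hA : inOmega r c F A) (hB : inNbhd r c F i j A B) :
    Uset F i j B ∪ Lset F i j B = Uset F i j A ∪ Lset F i j A ∧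
    usize F i j B = usize F i j A ∧ lsize F i j B = lsize F i j A := by
  set S := Uset F i j A ∪ Lset F i j A with hS
  have hUA : ∀ k ∈ Uset F i j A, A i k = true ∧ A j k = false ∧ (j, k) ∉ F := by
    intro k hk; simpa [Uset] using hk
  have hLA : ∀ k ∈ Lset F i j A, A i k = false ∧ A j k = true ∧ (i, k) ∉ F := by
    intro k hk; simpa [Lset] using hk
  have hout : ∀ k, k ∉ S → ∀ l, B l k = A l k := by
    intro k hk l
    refine hB.2 l k ?_
    simp only [Finset.mem_product]
    tauto
  have hnotij : ∀ k, ∀ l : Fin m, l ≠ i → l ≠ j → B l k = A l k := by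
    intro k l h1 h2
    refine hB.2 l k ?_
    simp only [Finset.mem_product, Finset.mem_insert, Finset.mem_singleton]
    tauto
  have hsum1 : ∀ k ∈ S, (B i k).toNat + (B j k).toNat = 1 := by
    intro k hk
    have hcnt := sum_toNat_eq_of_agree (fun l => B l k) (fun l => A l k) {i, j}
      (by intro l hl
          simp only [Finset.mem_insert, Finset.mem_singleton] at hl
          push_neg at hl
          exact hnotij k l hl.1 hl.2)
      (by rw [hB.1.2.1 k, hA.2.1 k])
    rw [Finset.sum_pair hij, Finset.sum_pair hij] at hcnt
    have h1 : (A i k).toNat + (A j k).toNat = 1 := by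
      rcases Finset.mem_union.mp hk with h | h
      · obtain ⟨h1, h2, -⟩ := hUA k h; simp [h1, h2]
      · obtain ⟨h1, h2, -⟩ := hLA k h; simp [h1, h2]
    omega
  have hUB : Uset F i j B = S.filter fun k => B i k = true := by
    ext k
    simp only [Uset, Finset.mem_filter, Finset.mem_univ, true_and]
    constructor
    · rintro ⟨h1, h2, h3⟩
      refine ⟨?_, h1⟩
      by_contra hk
      refine hk (Finset.mem_union_left _ ?_)
      simp only [Uset, Finset.mem_filter, Finset.mem_univ, true_and]
      exact ⟨(hout k hk i).symm.trans h1, (hout k hk j).symm.trans h2, h3⟩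
    · rintro ⟨hkS, h1⟩
      have h2 : B j k = false := by
        have := hsum1 k hkS
        rw [h1] at this
        cases hbj : B j k
        · rfl
        · rw [hbj] at this; simp at this
      refine ⟨h1, h2, ?_⟩
      rcases Finset.mem_union.mp hkS with h | h
      · exact (hUA k h).2.2
      · intro hF
        have := hA.2.2 (j, k) hF
        rw [(hLA k h).2.1] at this
        simp at this
  have hLB : Lset F i j B = S.filter fun k => B i k = false := by
    ext k
    simp only [Lset, Finset.mem_filter, Finset.mem_univ, true_and]
    constructor
    · rintro ⟨h1, h2, h3⟩
      refine ⟨?_, h1⟩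
      by_contra hk
      refine hk (Finset.mem_union_right _ ?_)
      simp only [Lset, Finset.mem_filter, Finset.mem_univ, true_and]
      exact ⟨(hout k hk i).symm.trans h1, (hout k hk j).symm.trans h2, h3⟩
    · rintro ⟨hkS, h1⟩
      have h2 : B j k = true := by
        have := hsum1 k hkS
        rw [h1] at this
        cases hbj : B j k
        · rw [hbj] at this; simp at this
        · rfl
      refine ⟨h1, h2, ?_⟩
      rcases Finset.mem_union.mp hkS with h | h
      · intro hF
        have := hA.2.2 (i, k) hF
        rw [(hUA k h).1] at this
        simp at this
      · exact (hLA k h).2.2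
  have hSA : S.filter (fun k => A i k = true) = Uset F i j A := by
    ext k
    simp only [Finset.mem_filter]
    constructor
    · rintro ⟨hkS, h1⟩
      rcases Finset.mem_union.mp hkS with h | h
      · exact h
      · rw [(hLA k h).1] at h1; exact absurd h1 (by simp)
    · intro h; exact ⟨Finset.mem_union_left _ h, (hUA k h).1⟩
  have hunion : Uset F i j B ∪ Lset F i j B = S := by
    rw [hUB, hLB]
    ext k
    simp only [Finset.mem_union, Finset.mem_filter]
    constructor
    · rintro (⟨h, -⟩ | ⟨h, -⟩) <;> exact h
    · intro h; cases hb : B i k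
      · exact Or.inr ⟨h, rfl⟩
      · exact Or.inl ⟨h, rfl⟩
  have husize : usize F i j B = usize F i j A := by
    have hrow := sum_toNat_eq_of_agree (fun k => B i k) (fun k => A i k) S
      (fun k hk => hout k hk i) (by rw [hB.1.1 i, hA.1 i])
    have hcardB : usize F i j B = ∑ k ∈ S, (B i k).toNat := by
      rw [usize, hUB, Finset.card_filter]
      exact Finset.sum_congr rfl fun k _ => by cases B i k <;> simp
    have hcardA : usize F i j A = ∑ k ∈ S, (A i k).toNat := by
      rw [usize, ← hSA, Finset.card_filter]
      exact Finset.sum_congr rfl fun k _ => by cases A i k <;> simp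
    rw [hcardB, hcardA, hrow]
  have hcardS : ∀ C : BinMat m n, Uset F i j C ∪ Lset F i j C = S →
      Uset F i j C = S.filter (fun k => C i k = true) →
      Lset F i j C = S.filter (fun k => C i k = false) →
      usize F i j C + lsize F i j C = S.card := by
    intro C h0 h1 h2
    rw [usize, lsize, h1, h2]
    rw [← Finset.card_filter_add_card_filter_not (p := fun k => C i k = true)
      (s := S)]
    congr 1
    apply congrArg
    apply Finset.filter_congr
    intro k _
    simp
  refine ⟨hunion, husize, ?_⟩
  have hA' : usize F i j A + lsize F i j A = S.card := by
    apply hcardS A rfl hSA.symm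
    ext k
    simp only [Lset, Finset.mem_filter, Finset.mem_univ, true_and]
    constructor
    · intro ⟨h1, h2, h3⟩
      exact ⟨Finset.mem_union_right _ (by simp [Lset, h1, h2, h3]), h1⟩
    · rintro ⟨hkS, h1⟩
      rcases Finset.mem_union.mp hkS with h | h
      · rw [(hUA k h).1] at h1; exact absurd h1 (by simp)
      · exact hLA k h
  have hB' : usize F i j B + lsize F i j B = S.card := hcardS B hunion hUB hLB
  omega

lemma mem_nbhdClass_iff {i j : Fin m} {A B : OmegaType r c F} :
    B ∈ nbhdClass r c F i j A ↔ inNbhd r c F i j A.val B.val := by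
  simp [nbhdClass]

lemma mem_nbhdClass_self (i j : Fin m) (A : OmegaType r c F) :
    A ∈ nbhdClass r c F i j A :=
  mem_nbhdClass_iff.mpr (inNbhd_refl i j A.2)

lemma nbhdClass_eq {i j : Fin m} (hij : i ≠ j) {A B : OmegaType r c F}
    (hB : inNbhd r c F i j A.val B.val) :
    nbhdClass r c F i j A = nbhdClass r c F i j B := by
  have hS := (nbhd_invariance hij A.2 hB).1
  ext C
  rw [mem_nbhdClass_iff, mem_nbhdClass_iff]; simp only [inNbhd, hS]
  constructor
  · rintro ⟨hC, hagr⟩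
    exact ⟨hC, fun k l hkl => (hagr k l hkl).trans (hB.2 k l hkl).symm⟩
  · rintro ⟨hC, hagr⟩
    exact ⟨hC, fun k l hkl => (hagr k l hkl).trans (hB.2 k l hkl)⟩

lemma class_unique {i j : Fin m} (hij : i ≠ j) {N : Finset (OmegaType r c F)}
    (hN : N ∈ nbhdClasses r c F i j) {A : OmegaType r c F} (hA : A ∈ N) :
    N = nbhdClass r c F i j A := by
  obtain ⟨B, -, rfl⟩ := Finset.mem_image.mp hN
  exact nbhdClass_eq hij (mem_nbhdClass_iff.mp hA)

lemma uclass_nbhdClass {i j : Fin m} (hij : i ≠ j) (A : OmegaType r c F) :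
    uclass i j (nbhdClass r c F i j A) = usize F i j A.val := by
  unfold uclass
  apply le_antisymm
  · apply Finset.sup_le
    intro B hB
    exact le_of_eq (nbhd_invariance hij A.2 (mem_nbhdClass_iff.mp hB)).2.1
  · exact Finset.le_sup (f := fun B : OmegaType r c F => usize F i j B.val)
      (mem_nbhdClass_self i j A)

lemma lclass_nbhdClass {i j : Fin m} (hij : i ≠ j) (A : OmegaType r c F) :
    lclass i j (nbhdClass r c F i j A) = lsize F i j A.val := by
  unfold lclass
  apply le_antisymm
  · apply Finset.sup_le
    intro B hB
    exact le_of_eq (nbhd_invariance hij A.2 (mem_nbhdClass_iff.mp hB)).2.2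
  · exact Finset.le_sup (f := fun B : OmegaType r c F => lsize F i j B.val)
      (mem_nbhdClass_self i j A)

lemma nbhdClass_mem (i j : Fin m) (A : OmegaType r c F) :
    nbhdClass r c F i j A ∈ nbhdClasses r c F i j :=
  Finset.mem_image_of_mem _ (Finset.mem_univ A)

lemma col_sum_eq {i j : Fin m} (hij : i ≠ j) {A B : BinMat m n}
    (hA : inOmega r c F A) (hB : inOmega r c F B) (h : switchAdjIJ F i j A B)
    (l : Fin n) :
    (A i l).toNat + (A j l).toNat = (B i l).toNat + (B j l).toNat := by
  have hagree : ∀ x : Fin m, x ∉ ({i, j} : Finset (Fin m)) → A x l = B x l := by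
    intro x hx
    simp only [Finset.mem_insert, Finset.mem_singleton] at hx
    push_neg at hx
    by_contra hne
    rcases h.2.1 (x, l) (Finset.mem_filter.mpr ⟨Finset.mem_univ _, hne⟩) with e | e
    · exact hx.1 e
    · exact hx.2 e
  have hcnt := sum_toNat_eq_of_agree (fun x => A x l) (fun x => B x l) {i, j}
    hagree (by rw [hA.2.1 l, hB.2.1 l])
  rw [Finset.sum_pair hij, Finset.sum_pair hij] at hcnt
  exact hcnt

lemma switchAdj_diff_col {i j : Fin m} (hij : i ≠ j) {A B : BinMat m n}
    (hA : inOmega r c F A) (hB : inOmega r c F B) (h : switchAdjIJ F i j A B)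
    {k : Fin m} {l : Fin n} (hkl : A k l ≠ B k l) :
    A i l ≠ B i l ∧ A j l ≠ B j l := by
  have hk : k = i ∨ k = j := h.2.1 (k, l)
    (by simp only [Finset.mem_filter, Finset.mem_univ, true_and]; exact hkl)
  have hsum := col_sum_eq hij hA hB h l
  rcases hk with rfl | rfl
  · refine ⟨hkl, fun hje => ?_⟩
    rw [hje] at hsum
    have : A k l = B k l := by
      cases hA' : A k l <;> cases hB' : B k l <;> simp [hA', hB'] at hsum ⊢
    exact hkl this
  · refine ⟨fun hie => ?_, hkl⟩
    rw [hie] at hsum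
    have : A k l = B k l := by
      cases hA' : A k l <;> cases hB' : B k l <;> simp [hA', hB'] at hsum ⊢
    exact hkl this

lemma switchAdj_row_occurs {i j : Fin m} (hij : i ≠ j) {A B : BinMat m n}
    (hA : inOmega r c F A) (hB : inOmega r c F B) (h : switchAdjIJ F i j A B) :
    (∃ l, A i l ≠ B i l) ∧ (∃ l, A j l ≠ B j l) := by
  have hne : ((univ : Finset (Fin m × Fin n)).filter
      fun p => A p.1 p.2 ≠ B p.1 p.2).Nonempty := by
    rw [← Finset.card_pos, h.1]; norm_num
  obtain ⟨p, hp⟩ := hne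
  have hd : A p.1 p.2 ≠ B p.1 p.2 := (Finset.mem_filter.mp hp).2
  have hcol := switchAdj_diff_col hij hA hB h hd
  exact ⟨⟨p.2, hcol.1⟩, ⟨p.2, hcol.2⟩⟩

lemma switchAdj_pair_unique {A B : BinMat m n} (hA : inOmega r c F A)
    (hB : inOmega r c F B) {i j i' j' : Fin m} (hij : i < j) (hij' : i' < j')
    (h : switchAdjIJ F i j A B) (h' : switchAdjIJ F i' j' A B) :
    i = i' ∧ j = j' := by
  obtain ⟨⟨li, hi⟩, ⟨lj, hj⟩⟩ := switchAdj_row_occurs hij.ne hA hB h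
  have h1 : i = i' ∨ i = j' := h'.2.1 (i, li)
    (by simp only [Finset.mem_filter, Finset.mem_univ, true_and]; exact hi)
  have h2 : j = i' ∨ j = j' := h'.2.1 (j, lj)
    (by simp only [Finset.mem_filter, Finset.mem_univ, true_and]; exact hj)
  obtain ⟨⟨li', hi'⟩, ⟨lj', hj'⟩⟩ := switchAdj_row_occurs hij'.ne hA hB h'
  have h3 : i' = i ∨ i' = j := h.2.1 (i', li')
    (by simp only [Finset.mem_filter, Finset.mem_univ, true_and]; exact hi')
  have h4 : j' = i ∨ j' = j := h.2.1 (j', lj')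
    (by simp only [Finset.mem_filter, Finset.mem_univ, true_and]; exact hj')
  have hvi : (i : ℕ) < (j : ℕ) := hij
  have hvi' : (i' : ℕ) < (j' : ℕ) := hij'
  have e1 : (i : ℕ) = i' ∨ (i : ℕ) = j' := by
    rcases h1 with e | e <;> [left; right] <;> rw [e]
  have e2 : (j : ℕ) = i' ∨ (j : ℕ) = j' := by
    rcases h2 with e | e <;> [left; right] <;> rw [e]
  have e3 : (i' : ℕ) = i ∨ (i' : ℕ) = j := by
    rcases h3 with e | e <;> [left; right] <;> rw [e]
  have e4 : (j' : ℕ) = i ∨ (j' : ℕ) = j := by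
    rcases h4 with e | e <;> [left; right] <;> rw [e]
  have : (i : ℕ) = i' ∧ (j : ℕ) = j' := by omega
  exact ⟨Fin.ext this.1, Fin.ext this.2⟩

lemma switchAdj_inNbhd {i j : Fin m} (hij : i ≠ j) {A B : BinMat m n}
    (hA : inOmega r c F A) (hB : inOmega r c F B) (h : switchAdjIJ F i j A B) :
    inNbhd r c F i j A B := by
  refine ⟨hB, fun k l hkl => ?_⟩
  by_contra hne
  have hne' : A k l ≠ B k l := fun e => hne e.symm
  have hk : k = i ∨ k = j := h.2.1 (k, l)
    (by simp only [Finset.mem_filter, Finset.mem_univ, true_and]; exact hne')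
  have hcol := switchAdj_diff_col hij hA hB h hne'
  have hF := h.2.2 (k, l)
    (by simp only [Finset.mem_filter, Finset.mem_univ, true_and]; exact hne')
  have hsum := col_sum_eq hij hA hB h l
  apply hkl
  simp only [Finset.mem_product, Finset.mem_insert, Finset.mem_singleton,
    Finset.mem_union]
  refine ⟨hk, ?_⟩
  have hAiAj : A i l ≠ A j l := by
    intro e
    rw [e] at hsum
    cases hAj : A j l <;> cases hBi : B i l <;> cases hBj : B j l <;>
      rw [hAj] at hsum hcol <;> rw [hBi, hBj] at hsum <;>
      simp_all
  cases hAi : A i l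
  · right
    have hAj : A j l = true := by
      cases hAj : A j l
      · rw [hAi, hAj] at hAiAj; exact absurd rfl hAiAj
      · rfl
    simp only [Lset, Finset.mem_filter, Finset.mem_univ, true_and]
    exact ⟨hAi, hAj, hF.1⟩
  · left
    have hAj : A j l = false := by
      cases hAj : A j l
      · rfl
      · rw [hAi, hAj] at hAiAj; exact absurd rfl hAiAj
    simp only [Uset, Finset.mem_filter, Finset.mem_univ, true_and]
    exact ⟨hAi, hAj, hF.2⟩

end Aux

/-- if `γ > 0` satisfies `1 - u_ij(A) l_ij(A) γ > 0` on all of `Ω`, then the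
`γ`-switch chain decomposes over row pairs and binomial-neighborhood classes as
`P_γ = Σ_{i<j} C(m,2)⁻¹ Σ_{N ∈ R_(i,j)} [(1 - u l γ) I_N + γ M(H_N)]`, and the Curveball
chain is its heat-bath variant: `P_c = Σ_{i<j} C(m,2)⁻¹ Σ_{N ∈ R_(i,j)} C(u+l,u)⁻¹ J_N`. -/
theorem stmt_8 {m n : ℕ} (r : Fin m → ℕ) (c : Fin n → ℕ) (F : Finset (Fin m × Fin n))
    (γ : ℝ) (hγ : 0 < γ)
    (hass : ∀ A : BinMat m n, inOmega r c F A → ∀ p ∈ rowPairs m,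
      0 < 1 - (usize F p.1 p.2 A : ℝ) * (lsize F p.1 p.2 A : ℝ) * γ) :
    Pgamma r c F γ =
      ∑ p ∈ rowPairs m, (m.choose 2 : ℝ)⁻¹ •
        ∑ N ∈ nbhdClasses r c F p.1 p.2,
          ((1 - (uclass p.1 p.2 N : ℝ) * (lclass p.1 p.2 N : ℝ) * γ) • diagOn N +
            γ • johnsonAdjOn p.1 p.2 N) ∧
    Pcurve r c F =
      ∑ p ∈ rowPairs m, (m.choose 2 : ℝ)⁻¹ •
        ∑ N ∈ nbhdClasses r c F p.1 p.2,
          (((uclass p.1 p.2 N + lclass p.1 p.2 N).choose (uclass p.1 p.2 N) : ℝ))⁻¹ •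
            onesOn N := by
  constructor
  · -- γ-switch chain decomposition
    ext A B
    simp only [Matrix.sum_apply, Matrix.smul_apply, Matrix.add_apply, smul_eq_mul,
      diagOn, johnsonAdjOn, Matrix.of_apply]
    by_cases hAB : A = B
    · subst hAB
      rw [Pgamma, Matrix.of_apply, if_pos rfl, Finset.mul_sum]
      refine Finset.sum_congr rfl fun p hp => ?_
      have hne : p.1 ≠ p.2 := ((Finset.mem_filter.mp hp).2).ne
      congr 1
      rw [Finset.sum_eq_single_of_mem (nbhdClass r c F p.1 p.2 A)
        (nbhdClass_mem p.1 p.2 A) ?_]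
      · rw [uclass_nbhdClass hne, lclass_nbhdClass hne,
          if_pos ⟨rfl, mem_nbhdClass_self p.1 p.2 A⟩, if_neg ?_]
        · ring
        · rintro ⟨-, -, hadj⟩
          have h4 := hadj.1
          simp at h4
      · intro N hN hNe
        have hAN : A ∉ N := fun hm => hNe (class_unique hne hN hm)
        rw [if_neg (fun h => hAN h.2), if_neg (fun h => hAN h.1)]
        ring
    · rw [Pgamma, Matrix.of_apply, if_neg hAB]
      trans ∑ p ∈ rowPairs m,
        (if switchAdjIJ F p.1 p.2 A.val B.val then (m.choose 2 : ℝ)⁻¹ * γ else 0)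
      · by_cases hex : ∃ p ∈ rowPairs m, switchAdjIJ F p.1 p.2 A.val B.val
        · rw [if_pos hex]
          obtain ⟨p₀, hp₀, hadj₀⟩ := hex
          rw [Finset.sum_eq_single_of_mem p₀ hp₀ ?_]
          · rw [if_pos hadj₀]
          · intro q hq hqne
            rw [if_neg]
            intro hadjq
            apply hqne
            have h1 := switchAdj_pair_unique A.2 B.2 (Finset.mem_filter.mp hq).2
              (Finset.mem_filter.mp hp₀).2 hadjq hadj₀
            exact Prod.ext h1.1 h1.2
        · rw [if_neg hex]
          exact (Finset.sum_eq_zero fun p hp => if_neg (fun h => hex ⟨p, hp, h⟩)).symm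
      · refine Finset.sum_congr rfl fun p hp => ?_
        have hne : p.1 ≠ p.2 := ((Finset.mem_filter.mp hp).2).ne
        rw [Finset.sum_eq_single_of_mem (nbhdClass r c F p.1 p.2 A)
          (nbhdClass_mem p.1 p.2 A) ?_]
        · by_cases hadj : switchAdjIJ F p.1 p.2 A.val B.val
          · rw [if_pos hadj,
              if_neg (show ¬(A = B ∧ A ∈ nbhdClass r c F p.1 p.2 A) from
                fun h => hAB h.1),
              if_pos ⟨mem_nbhdClass_self p.1 p.2 A,
                mem_nbhdClass_iff.mpr (switchAdj_inNbhd hne A.2 B.2 hadj), hadj⟩]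
            ring
          · rw [if_neg hadj,
              if_neg (show ¬(A = B ∧ A ∈ nbhdClass r c F p.1 p.2 A) from
                fun h => hAB h.1),
              if_neg (show ¬(A ∈ nbhdClass r c F p.1 p.2 A ∧
                  B ∈ nbhdClass r c F p.1 p.2 A ∧ switchAdjIJ F p.1 p.2 A.val B.val) from
                fun h => hadj h.2.2)]
            ring
        · intro N hN hNe
          have hAN : A ∉ N := fun hm => hNe (class_unique hne hN hm)
          rw [if_neg (fun h => hAN h.2), if_neg (fun h => hAN h.1)]
          ring
  · -- Curveball chain decomposition
    ext A B
    simp only [Matrix.sum_apply, Matrix.smul_apply, smul_eq_mul, onesOn,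
      Matrix.of_apply]
    by_cases hAB : A = B
    · subst hAB
      rw [Pcurve, Matrix.of_apply, if_pos rfl, Finset.mul_sum]
      refine Finset.sum_congr rfl fun p hp => ?_
      have hne : p.1 ≠ p.2 := ((Finset.mem_filter.mp hp).2).ne
      congr 1
      rw [Finset.sum_eq_single_of_mem (nbhdClass r c F p.1 p.2 A)
        (nbhdClass_mem p.1 p.2 A) ?_]
      · rw [uclass_nbhdClass hne, lclass_nbhdClass hne,
          if_pos ⟨mem_nbhdClass_self p.1 p.2 A, mem_nbhdClass_self p.1 p.2 A⟩]
        ring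
      · intro N hN hNe
        have hAN : A ∉ N := fun hm => hNe (class_unique hne hN hm)
        rw [if_neg (fun h => hAN h.1)]
        ring
    · rw [Pcurve, Matrix.of_apply, if_neg hAB]
      refine Finset.sum_congr rfl fun p hp => ?_
      have hne : p.1 ≠ p.2 := ((Finset.mem_filter.mp hp).2).ne
      rw [Finset.sum_eq_single_of_mem (nbhdClass r c F p.1 p.2 A)
        (nbhdClass_mem p.1 p.2 A) ?_]
      · rw [uclass_nbhdClass hne, lclass_nbhdClass hne]
        by_cases hnb : inNbhd r c F p.1 p.2 A.val B.val
        · rw [if_pos hnb, if_pos ⟨mem_nbhdClass_self p.1 p.2 A,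
            mem_nbhdClass_iff.mpr hnb⟩]
          ring
        · rw [if_neg hnb, if_neg (fun h => hnb (mem_nbhdClass_iff.mp h.2))]
          ring
      · intro N hN hNe
        have hAN : A ∉ N := fun hm => hNe (class_unique hne hN hm)
        rw [if_neg (fun h => hAN h.1)]
        ring
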